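/- Sufficient descent of the asynchronous Lyapunov function: Let L^k := F(z̄^k) + (ψ^k)ᵀG̃(H^k), where z̄^{k+1} = z̄^k + γψ_{i}^k Δ^k with ψ_i^k ∈ [η, 1], and suppose (a) F is L-smooth, (b) the subproblem optimality gives ∇F(z̄^k)ᵀΔ^k ≤ −μ̃‖Δ^k‖² + G(x^k) − G(x̃^k) + (∇F(z̄^k) − g)ᵀΔ^k for appropriate g, and (c) the G-terms satisfy γψ_i^k(G(x^k) − G(x̃^k)) ≤ (ψ^k)ᵀG̃(H^k) − (ψ^{k+1})ᵀG̃(H^{k+1}). Then for any ε₁, ε₂ > 0, L^{k+1} ≤ L^k − γ(ημ̃ − γ(L/2 + 1/(2ε₁) + 1/(2ε₂)))‖Δ^k‖² + (ε₁/2)l²I·E_x² + (ε₂/2)I²E_y², where E_x, E_y bound the consensus and tracking disagreements via ‖∇F(z̄^k) − g‖ ≤ l√I·E_x + I·E_y. -/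

import Mathlib

open scoped RealInnerProductSpace


lemma descent_lemma {n : ℕ} (F : EuclideanSpace ℝ (Fin n) → ℝ)
    (F' : EuclideanSpace ℝ (Fin n) → EuclideanSpace ℝ (Fin n)) (L : ℝ) (hL : 0 ≤ L)
    (hF : ∀ z, HasGradientAt F (F' z) z)
    (hlip : ∀ z w, ‖F' z - F' w‖ ≤ L * ‖z - w‖)
    (x v : EuclideanSpace ℝ (Fin n)) :
    F (x + v) ≤ F x + ⟪F' x, v⟫ + L / 2 * ‖v‖ ^ 2 := by
  have hcont : Continuous F' := by
    rcases eq_or_lt_of_le hL with h | h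
    · have : ∀ z w, F' z = F' w := fun z w => by
        have := hlip z w; rw [← h] at this
        simpa [norm_le_zero_iff, sub_eq_zero] using this
      exact continuous_const.congr fun z => (this x z)
    · exact (LipschitzWith.of_dist_le_mul (K := ⟨L, hL⟩) (fun z w => by
        rw [dist_eq_norm, dist_eq_norm]; exact hlip z w)).continuous
  set φ : ℝ → ℝ := fun t => F (x + t • v) with hφdef
  have hderiv : ∀ t : ℝ, HasDerivAt φ ⟪F' (x + t • v), v⟫ t := by
    intro t
    have h1 : HasFDerivAt F ((InnerProductSpace.toDual ℝ _) (F' (x + t • v))) (x + t • v) :=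
      (hF _).hasFDerivAt
    have h2 : HasDerivAt (fun t : ℝ => x + t • v) v t := by
      simpa using ((hasDerivAt_id t).smul_const v).const_add x
    exact (h1.comp_hasDerivAt t h2).congr_deriv (by simp)
  have hcont2 : Continuous fun t : ℝ => ⟪F' (x + t • v), v⟫ :=
    (hcont.comp (continuous_const.add (continuous_id.smul continuous_const))).inner
      continuous_const
  have hint : F (x + v) - F x = ∫ t in (0:ℝ)..1, ⟪F' (x + t • v), v⟫ := by
    rw [intervalIntegral.integral_eq_sub_of_hasDerivAt (fun t _ => hderiv t)
      (hcont2.intervalIntegrable 0 1)]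
    simp [hφdef]
  have hbound : ∫ t in (0:ℝ)..1, ⟪F' (x + t • v), v⟫ ≤
      ∫ t in (0:ℝ)..1, (⟪F' x, v⟫ + L * t * ‖v‖ ^ 2) := by
    apply intervalIntegral.integral_mono_on zero_le_one
      (hcont2.intervalIntegrable 0 1)
      (Continuous.intervalIntegrable (by continuity) 0 1)
    intro t ht
    have ht0 : 0 ≤ t := ht.1
    have key : ⟪F' (x + t • v) - F' x, v⟫ ≤ L * t * ‖v‖ ^ 2 := by
      calc ⟪F' (x + t • v) - F' x, v⟫ ≤ ‖F' (x + t • v) - F' x‖ * ‖v‖ :=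
            real_inner_le_norm _ _
        _ ≤ (L * ‖(x + t • v) - x‖) * ‖v‖ :=
            mul_le_mul_of_nonneg_right (hlip _ _) (norm_nonneg v)
        _ = L * t * ‖v‖ ^ 2 := by
            rw [add_sub_cancel_left, norm_smul, Real.norm_of_nonneg ht0]; ring
    have heq : ⟪F' (x + t • v), v⟫ = ⟪F' x, v⟫ + ⟪F' (x + t • v) - F' x, v⟫ := by
      rw [inner_sub_left]; ring
    rw [heq]; linarith
  have hval : ∫ t in (0:ℝ)..1, (⟪F' x, v⟫ + L * t * ‖v‖ ^ 2) =
      ⟪F' x, v⟫ + L / 2 * ‖v‖ ^ 2 := by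
    rw [intervalIntegral.integral_add (intervalIntegrable_const)
      (Continuous.intervalIntegrable (by fun_prop) 0 1)]
    rw [show (fun t : ℝ => L * t * ‖v‖ ^ 2) = fun t : ℝ => (L * ‖v‖ ^ 2) * t by ext t; ring]
    rw [intervalIntegral.integral_const_mul, integral_id, intervalIntegral.integral_const]
    simp; ring
  linarith [hint, hbound, hval]


lemma young_ineq (x y ε : ℝ) (hε : 0 < ε) : x * y ≤ ε / 2 * x ^ 2 + y ^ 2 / (2 * ε) := by
  have h : 2 * ε * (x * y) ≤ ε ^ 2 * x ^ 2 + y ^ 2 := by nlinarith [sq_nonneg (ε * x - y)]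
  have he : ε / 2 * x ^ 2 + y ^ 2 / (2 * ε) = (ε ^ 2 * x ^ 2 + y ^ 2) / (2 * ε) := by
    field_simp
  rw [he, le_div_iff₀ (by linarith)]; linarith

set_option maxHeartbeats 4000000 in
/-- sufficient descent of the asynchronous Lyapunov function
`L^k = F(z̄^k) + (ψ^k)ᵀ G̃(H^k)` at one step `k`, where
`z̄^{k+1} = z̄^k + γ ψ_{i^k}^k Δ^k`.  Here `H k : Fin S → E` are the rows of the
augmented matrix, `G̃` applies `G` row-wise, `xk`/`xtk` are the current iterate
and subproblem solution of the active agent `i k`, `Δ k = xtk − xk`, `g` is the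
(scaled) gradient tracker, and the error `∇F(z̄^k) − g` decomposes as `a + b`
with `‖a‖ ≤ l√I·E_x` and `‖b‖ ≤ I·E_y`. -/
theorem stmt_19 {n S I : ℕ} (hI : 0 < I)
    (F G : EuclideanSpace ℝ (Fin n) → ℝ)
    (Fgrad : EuclideanSpace ℝ (Fin n) → EuclideanSpace ℝ (Fin n))
    (L l μ η γ : ℝ)
    (hF : ∀ z, HasGradientAt F (Fgrad z) z)
    (hFlip : ∀ z w, ‖Fgrad z - Fgrad w‖ ≤ L * ‖z - w‖)
    (hL : 0 ≤ L) (hl : 0 ≤ l) (hμ : 0 < μ) (hη : 0 < η)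
    (hγ0 : 0 < γ) (hγ1 : γ ≤ 1)
    (ψ : ℕ → Fin S → ℝ)
    (hψnn : ∀ k i, 0 ≤ ψ k i) (hψsum : ∀ k, ∑ i, ψ k i = 1)
    (hψlow : ∀ k i, η ≤ ψ k i)
    (H : ℕ → Fin S → EuclideanSpace ℝ (Fin n))
    (zbar : ℕ → EuclideanSpace ℝ (Fin n))
    (ik : ℕ → Fin S)
    (k : ℕ)
    (xk xtk g : EuclideanSpace ℝ (Fin n))
    (Δ : EuclideanSpace ℝ (Fin n)) (hΔ : Δ = xtk - xk)
    (hz : zbar (k + 1) = zbar k + (γ * ψ k (ik k)) • Δ)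
    (hψ1 : ψ k (ik k) ≤ 1)
    (hsubopt : ⟪Fgrad (zbar k), Δ⟫ ≤
      -μ * ‖Δ‖ ^ 2 + G xk - G xtk + ⟪Fgrad (zbar k) - g, Δ⟫)
    (hGstep : γ * ψ k (ik k) * (G xk - G xtk) ≤
      (∑ i, ψ k i * G (H k i)) - ∑ i, ψ (k + 1) i * G (H (k + 1) i))
    (Ex Ey : ℝ) (hEx : 0 ≤ Ex) (hEy : 0 ≤ Ey)
    (a b : EuclideanSpace ℝ (Fin n))
    (hab : Fgrad (zbar k) - g = a + b)
    (ha : ‖a‖ ≤ l * Real.sqrt I * Ex) (hb : ‖b‖ ≤ (I : ℝ) * Ey) :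
    ∀ ε₁ ε₂ : ℝ, 0 < ε₁ → 0 < ε₂ →
      F (zbar (k + 1)) + ∑ i, ψ (k + 1) i * G (H (k + 1) i) ≤
        F (zbar k) + (∑ i, ψ k i * G (H k i))
          - γ * (η * μ - γ * (L / 2 + 1 / (2 * ε₁) + 1 / (2 * ε₂))) * ‖Δ‖ ^ 2
          + (ε₁ / 2) * l ^ 2 * (I : ℝ) * Ex ^ 2
          + (ε₂ / 2) * (I : ℝ) ^ 2 * Ey ^ 2 := by

  intro e1 e2 he1 he2
  set c : ℝ := γ * ψ k (ik k) with hc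
  have hcpos : 0 < c := mul_pos hγ0 (lt_of_lt_of_le hη (hψlow k (ik k)))
  have hclow : γ * η ≤ c := by
    have := hψlow k (ik k); nlinarith
  have hchigh : c ≤ γ := by nlinarith [hψ1]
  have hdesc : F (zbar (k+1)) ≤ F (zbar k) + ⟪Fgrad (zbar k), c • Δ⟫ + L / 2 * ‖c • Δ‖ ^ 2 := by
    rw [hz]; exact descent_lemma F Fgrad L hL hF hFlip (zbar k) (c • Δ)
  have hin : ⟪Fgrad (zbar k), c • Δ⟫ = c * ⟪Fgrad (zbar k), Δ⟫ := real_inner_smul_right _ _ _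
  have hns : ‖c • Δ‖ ^ 2 = c ^ 2 * ‖Δ‖ ^ 2 := by
    rw [norm_smul, Real.norm_of_nonneg hcpos.le]; ring
  rw [hin, hns] at hdesc
  rw [hab, inner_add_left] at hsubopt
  have hsub := mul_le_mul_of_nonneg_left hsubopt hcpos.le
  have hya : c * ⟪a, Δ⟫ ≤ e1 / 2 * ‖a‖ ^ 2 + 1 / (2 * e1) * c ^ 2 * ‖Δ‖ ^ 2 := by
    have h1 : ⟪a, Δ⟫ ≤ ‖a‖ * ‖Δ‖ := real_inner_le_norm _ _
    have h2 : c * ⟪a, Δ⟫ ≤ ‖a‖ * (c * ‖Δ‖) := by nlinarith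
    have h3 := young_ineq ‖a‖ (c * ‖Δ‖) e1 he1
    have h4 : (c * ‖Δ‖) ^ 2 / (2 * e1) = 1 / (2 * e1) * c ^ 2 * ‖Δ‖ ^ 2 := by ring
    linarith [h4 ▸ h3]
  have hyb : c * ⟪b, Δ⟫ ≤ e2 / 2 * ‖b‖ ^ 2 + 1 / (2 * e2) * c ^ 2 * ‖Δ‖ ^ 2 := by
    have h1 : ⟪b, Δ⟫ ≤ ‖b‖ * ‖Δ‖ := real_inner_le_norm _ _
    have h2 : c * ⟪b, Δ⟫ ≤ ‖b‖ * (c * ‖Δ‖) := by nlinarith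
    have h3 := young_ineq ‖b‖ (c * ‖Δ‖) e2 he2
    have h4 : (c * ‖Δ‖) ^ 2 / (2 * e2) = 1 / (2 * e2) * c ^ 2 * ‖Δ‖ ^ 2 := by ring
    linarith [h4 ▸ h3]
  have hna : ‖a‖ ^ 2 ≤ l ^ 2 * (I : ℝ) * Ex ^ 2 := by
    have h := mul_self_le_mul_self (norm_nonneg a) ha
    have hs : Real.sqrt I * Real.sqrt I = (I : ℝ) := Real.mul_self_sqrt (Nat.cast_nonneg I)
    calc ‖a‖ ^ 2 = ‖a‖ * ‖a‖ := sq ‖a‖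
      _ ≤ l * Real.sqrt I * Ex * (l * Real.sqrt I * Ex) := h
      _ = l ^ 2 * (Real.sqrt I * Real.sqrt I) * Ex ^ 2 := by ring
      _ = l ^ 2 * (I : ℝ) * Ex ^ 2 := by rw [hs]
  have hnb : ‖b‖ ^ 2 ≤ (I : ℝ) ^ 2 * Ey ^ 2 := by
    have h := mul_self_le_mul_self (norm_nonneg b) hb
    calc ‖b‖ ^ 2 = ‖b‖ * ‖b‖ := sq ‖b‖
      _ ≤ (I : ℝ) * Ey * ((I : ℝ) * Ey) := h
      _ = (I : ℝ) ^ 2 * Ey ^ 2 := by ring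
  have hea : e1 / 2 * ‖a‖ ^ 2 ≤ e1 / 2 * (l ^ 2 * (I : ℝ) * Ex ^ 2) :=
    mul_le_mul_of_nonneg_left hna (by positivity)
  have heb : e2 / 2 * ‖b‖ ^ 2 ≤ e2 / 2 * ((I : ℝ) ^ 2 * Ey ^ 2) :=
    mul_le_mul_of_nonneg_left hnb (by positivity)
  have hmu : c * (-μ * ‖Δ‖ ^ 2) ≤ -(γ * η) * μ * ‖Δ‖ ^ 2 := by
    have h1 : γ * η * (μ * ‖Δ‖ ^ 2) ≤ c * (μ * ‖Δ‖ ^ 2) :=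
      mul_le_mul_of_nonneg_right hclow (by positivity)
    nlinarith
  have hc2 : c ^ 2 ≤ γ ^ 2 := by nlinarith
  have hcoef : (L / 2 + 1 / (2 * e1) + 1 / (2 * e2)) * c ^ 2 * ‖Δ‖ ^ 2 ≤
      (L / 2 + 1 / (2 * e1) + 1 / (2 * e2)) * γ ^ 2 * ‖Δ‖ ^ 2 := by
    have hpos : 0 ≤ L / 2 + 1 / (2 * e1) + 1 / (2 * e2) := by positivity
    have := mul_le_mul_of_nonneg_left hc2 hpos
    have := mul_le_mul_of_nonneg_right this (sq_nonneg ‖Δ‖)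
    calc (L / 2 + 1 / (2 * e1) + 1 / (2 * e2)) * c ^ 2 * ‖Δ‖ ^ 2
        = (L / 2 + 1 / (2 * e1) + 1 / (2 * e2)) * c ^ 2 * ‖Δ‖ ^ 2 := rfl
      _ ≤ (L / 2 + 1 / (2 * e1) + 1 / (2 * e2)) * γ ^ 2 * ‖Δ‖ ^ 2 := this
  have hcd : c * (-μ * ‖Δ‖ ^ 2 + G xk - G xtk + (⟪a, Δ⟫ + ⟪b, Δ⟫)) =
      c * (-μ * ‖Δ‖ ^ 2) + c * (G xk - G xtk) + c * ⟪a, Δ⟫ + c * ⟪b, Δ⟫ := by ring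
  rw [hcd] at hsub
  have T : F (zbar (k + 1)) + ∑ i, ψ (k + 1) i * G (H (k + 1) i) ≤
      F (zbar k) + (∑ i, ψ k i * G (H k i)) + (-(γ * η) * μ * ‖Δ‖ ^ 2)
        + (L / 2 + 1 / (2 * e1) + 1 / (2 * e2)) * γ ^ 2 * ‖Δ‖ ^ 2
        + e1 / 2 * (l ^ 2 * (I : ℝ) * Ex ^ 2) + e2 / 2 * ((I : ℝ) ^ 2 * Ey ^ 2) := by
    linarith [hdesc, hsub, hGstep, hmu, hya, hyb, hea, heb, hcoef]
  have hring : F (zbar k) + (∑ i, ψ k i * G (H k i)) + (-(γ * η) * μ * ‖Δ‖ ^ 2)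
        + (L / 2 + 1 / (2 * e1) + 1 / (2 * e2)) * γ ^ 2 * ‖Δ‖ ^ 2
        + e1 / 2 * (l ^ 2 * (I : ℝ) * Ex ^ 2) + e2 / 2 * ((I : ℝ) ^ 2 * Ey ^ 2)
      = F (zbar k) + (∑ i, ψ k i * G (H k i))
          - γ * (η * μ - γ * (L / 2 + 1 / (2 * e1) + 1 / (2 * e2))) * ‖Δ‖ ^ 2
          + (e1 / 2) * l ^ 2 * (I : ℝ) * Ex ^ 2
          + (e2 / 2) * (I : ℝ) ^ 2 * Ey ^ 2 := by ring
  linarith [T, hring.le, hring.ge]
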